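/- Let n, d ≥ 1, X ∈ Matrix (Fin n) (Fin d) ℝ, y ∈ ℝ^n, and λ > 0. Suppose w : ℝ → ℝ^d is differentiable and solves the weight-decayed gradient flow w'(t) = −(1/n)·Xᵀ.mulVec (X.mulVec w(t) − y) − λ·w(t) for all t ≥ 0, with w(0) = 0. Then as t → ∞, w(t) converges to Xᵀ.mulVec ((X·Xᵀ + n·λ·1)⁻¹.mulVec y), the kernel ridge regression solution with regularization n·λ (the matrix X·Xᵀ + n·λ·1 is invertible since λ > 0 and X·Xᵀ is positive semidefinite). -/

import Mathlib

open Matrix Filter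


lemma smul_one_posDef {n : ℕ} {c : ℝ} (hc : 0 < c) :
    (c • (1 : Matrix (Fin n) (Fin n) ℝ)).PosDef := by
  exact Matrix.PosDef.one.smul hc

lemma B_posDef {n d : ℕ} (X : Matrix (Fin n) (Fin d) ℝ) {c : ℝ} (hc : 0 < c) :
    (X * Xᵀ + c • (1 : Matrix (Fin n) (Fin n) ℝ)).PosDef := by
  have h1 : (X * Xᴴ).PosSemidef := Matrix.posSemidef_self_mul_conjTranspose X
  exact Matrix.PosDef.posSemidef_add h1 (smul_one_posDef hc)

/-- **Weight-decayed gradient flow converges to ridge regression.** If `w` solves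
`w'(t) = −(1/n) Xᵀ (X w(t) − y) − λ w(t)` for `t ≥ 0` with `w(0) = 0` and `λ > 0`, then
`w(t) → Xᵀ (X Xᵀ + n λ I)⁻¹ y` as `t → ∞`, the kernel ridge regression solution with
regularization `n λ`. -/
theorem weight_decayed_flow_to_ridge {n d : ℕ} (hn : 1 ≤ n) (hd : 1 ≤ d)
    (X : Matrix (Fin n) (Fin d) ℝ) (y : Fin n → ℝ) (lam : ℝ) (hlam : 0 < lam)
    (w : ℝ → Fin d → ℝ)
    (hw : ∀ t : ℝ, 0 ≤ t →
      HasDerivAt w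
        (-((n : ℝ)⁻¹ • Xᵀ.mulVec (X.mulVec (w t) - y)) - lam • w t) t)
    (hw0 : w 0 = 0) :
    Tendsto w atTop
      (nhds (Xᵀ.mulVec
        ((X * Xᵀ + ((n : ℝ) * lam) • (1 : Matrix (Fin n) (Fin n) ℝ))⁻¹.mulVec y))) := by
  have hne : (n : ℝ) ≠ 0 := by positivity
  set B : Matrix (Fin n) (Fin n) ℝ :=
    X * Xᵀ + ((n : ℝ) * lam) • (1 : Matrix (Fin n) (Fin n) ℝ) with hBdef
  have hB : B.PosDef := B_posDef X (by positivity)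
  have hBinv : B * B⁻¹ = 1 := Matrix.mul_nonsing_inv B hB.det_pos.ne'.isUnit
  set z : Fin n → ℝ := B⁻¹.mulVec y with hz
  set ws : Fin d → ℝ := Xᵀ.mulVec z with hws
  -- the fixed point equation
  have hBz : B.mulVec z = y := by
    rw [hz, Matrix.mulVec_mulVec, hBinv, Matrix.one_mulVec]
  have key : Xᵀ.mulVec (X.mulVec ws) + ((n : ℝ) * lam) • ws = Xᵀ.mulVec y := by
    conv_rhs => rw [← hBz, hBdef, Matrix.add_mulVec, Matrix.smul_mulVec,
      Matrix.one_mulVec]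
    rw [Matrix.mulVec_add, Matrix.mulVec_smul, hws]
    simp [Matrix.mulVec_mulVec, Matrix.mul_assoc]
  have hstar : (n : ℝ)⁻¹ • Xᵀ.mulVec (X.mulVec ws - y) + lam • ws = 0 := by
    funext i
    have hk := congrFun key i
    simp only [Matrix.mulVec_sub, Pi.add_apply, Pi.smul_apply, Pi.sub_apply, Pi.zero_apply,
      smul_eq_mul] at hk ⊢
    field_simp at hk ⊢
    linarith [hk]
  -- error dynamics
  set e : ℝ → Fin d → ℝ := fun t => w t - ws with he
  set D : ℝ → Fin d → ℝ :=
    fun t => -((n : ℝ)⁻¹ • Xᵀ.mulVec (X.mulVec (e t)) + lam • e t) with hD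
  have hw' : ∀ t : ℝ, 0 ≤ t → HasDerivAt e (D t) t := by
    intro t ht
    have h := (hw t ht).sub_const ws
    refine h.congr_deriv ?_
    funext i
    have hs := congrFun hstar i
    simp only [hD, he, Matrix.mulVec_sub, Pi.neg_apply, Pi.add_apply, Pi.smul_apply,
      Pi.sub_apply, Pi.zero_apply, smul_eq_mul] at hs ⊢
    linarith [hs]
  -- coordinate derivatives
  have hwc : ∀ t : ℝ, 0 ≤ t → ∀ i, HasDerivAt (fun s => e s i) (D t i) t := by
    intro t ht i
    exact ((ContinuousLinearMap.proj (R := ℝ) (φ := fun _ : Fin d => ℝ) i).hasFDerivAt).comp_hasDerivAt t (hw' t ht)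
  -- energy
  set g : ℝ → ℝ := fun t => ∑ i, (e t i) * (e t i) with hg
  have hgderiv : ∀ t : ℝ, 0 ≤ t →
      HasDerivAt g (∑ i, (D t i * e t i + e t i * D t i)) t := by
    intro t ht
    exact HasDerivAt.fun_sum fun i _ => (hwc t ht i).mul (hwc t ht i)
  have hgnonneg : ∀ t, 0 ≤ g t := fun t =>
    Finset.sum_nonneg fun i _ => mul_self_nonneg _
  -- the key differential inequality
  have hineq : ∀ t : ℝ, 0 ≤ t →
      (∑ i, (D t i * e t i + e t i * D t i)) ≤ -(2 * lam) * g t := by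
    intro t ht
    have h1 : (∑ i, (D t i * e t i + e t i * D t i)) = 2 * (e t ⬝ᵥ D t) := by
      simp [dotProduct, Finset.mul_sum, mul_comm, two_mul, Finset.sum_add_distrib]
    have h2 : e t ⬝ᵥ D t
        = -((n : ℝ)⁻¹ * ((X.mulVec (e t)) ⬝ᵥ (X.mulVec (e t))) + lam * (e t ⬝ᵥ e t)) := by
      rw [hD]
      simp only [dotProduct_neg, dotProduct_add, dotProduct_smul,
        smul_eq_mul]
      congr 2
      rw [Matrix.dotProduct_mulVec, Matrix.vecMul_transpose]
    have h3 : 0 ≤ (X.mulVec (e t)) ⬝ᵥ (X.mulVec (e t)) :=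
      Finset.sum_nonneg fun i _ => mul_self_nonneg _
    have h4 : e t ⬝ᵥ e t = g t := rfl
    rw [h1, h2, h4]
    have : 0 ≤ (n : ℝ)⁻¹ * ((X.mulVec (e t)) ⬝ᵥ (X.mulVec (e t))) := by positivity
    nlinarith [hgnonneg t]
  -- exponential decay via monotonicity
  set h : ℝ → ℝ := fun t => g t * Real.exp (2 * lam * t) with hh
  have hhd : ∀ t : ℝ, 0 ≤ t →
      HasDerivAt h ((∑ i, (D t i * e t i + e t i * D t i)) * Real.exp (2 * lam * t)
        + g t * (Real.exp (2 * lam * t) * (2 * lam))) t := by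
    intro t ht
    have hexp : HasDerivAt (fun s : ℝ => Real.exp (2 * lam * s))
        (Real.exp (2 * lam * t) * (2 * lam)) t := by
      simpa using ((hasDerivAt_id t).const_mul (2 * lam)).exp
    exact (hgderiv t ht).mul hexp
  have hanti : AntitoneOn h (Set.Ici (0:ℝ)) := by
    apply antitoneOn_of_deriv_nonpos (convex_Ici 0)
    · intro t ht
      exact ((hhd t ht).differentiableAt.continuousAt).continuousWithinAt
    · rw [interior_Ici]
      intro t ht
      exact ((hhd t (le_of_lt ht)).differentiableAt).differentiableWithinAt
    · rw [interior_Ici]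
      intro t ht
      rw [(hhd t ht.le).deriv]
      have h1 := hineq t ht.le
      have h2 := hgnonneg t
      have h3 : 0 < Real.exp (2 * lam * t) := Real.exp_pos _
      nlinarith
  have hbound : ∀ t : ℝ, 0 ≤ t → g t ≤ g 0 * Real.exp (-(2 * lam * t)) := by
    intro t ht
    have h1 : g t * Real.exp (2 * lam * t) ≤ g 0 := by
      have := hanti (Set.self_mem_Ici) ht ht
      simpa [hh] using this
    have h3 : (0:ℝ) < Real.exp (2 * lam * t) := Real.exp_pos _
    rw [Real.exp_neg, ← div_eq_mul_inv, le_div_iff₀ h3]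
    exact h1
  have hgto : Tendsto g atTop (nhds 0) := by
    have hup : Tendsto (fun t => g 0 * Real.exp (-(2 * lam * t))) atTop (nhds 0) := by
      have : Tendsto (fun t : ℝ => -(2 * lam * t)) atTop atBot := by
        apply Filter.tendsto_neg_atBot_iff.mpr  -- maybe wrong name
        exact Tendsto.const_mul_atTop (by positivity) tendsto_id
      simpa using (Real.tendsto_exp_atBot.comp this).const_mul (g 0)
    refine tendsto_of_tendsto_of_tendsto_of_le_of_le' tendsto_const_nhds hup ?_ ?_
    · exact Eventually.of_forall hgnonneg
    · filter_upwards [eventually_ge_atTop (0:ℝ)] with t ht using hbound t ht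
  -- conclude coordinatewise
  rw [tendsto_pi_nhds]
  intro i
  have hsq : ∀ t, (e t i) ^ 2 ≤ g t := by
    intro t
    have := Finset.single_le_sum (f := fun j => e t j * e t j)
      (fun j _ => mul_self_nonneg _) (Finset.mem_univ i)
    simpa [sq] using this
  have habs : Tendsto (fun t => |e t i|) atTop (nhds 0) := by
    have hsqrt : Tendsto (fun t => Real.sqrt (g t)) atTop (nhds 0) := by
      have := (Real.continuous_sqrt.tendsto 0).comp hgto
      simpa [Function.comp_def] using this
    refine tendsto_of_tendsto_of_tendsto_of_le_of_le' tendsto_const_nhds hsqrt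
      (Eventually.of_forall fun t => abs_nonneg _)
      (Eventually.of_forall fun t => ?_)
    have := Real.sqrt_le_sqrt (hsq t)
    rwa [Real.sqrt_sq_eq_abs] at this
  have hei : Tendsto (fun t => e t i) atTop (nhds 0) := by
    have hneg : Tendsto (fun t => -|e t i|) atTop (nhds 0) := by
      simpa using habs.neg
    exact tendsto_of_tendsto_of_tendsto_of_le_of_le hneg habs
      (fun t => neg_abs_le _) (fun t => le_abs_self _)
  have : Tendsto (fun t => e t i + ws i) atTop (nhds (0 + ws i)) :=
    hei.add tendsto_const_nhds
  simpa [he] using this
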